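/- Let B be an order-2d array, I ⊆ [d], and B^{(I)} the order-2(d−|I|) array obtained by summing B along the diagonals of the axis pairs (l, l+d) for l ∈ I. Let I₁,…,I_κ be a partition of the remaining axes and extend it by the pairs {j, j+d} for j ∈ I to a partition of [2d]. Then ‖B^{(I)}‖_{I₁,…,I_κ} ≤ √(Π_{l∈I} n_l) · ‖B‖_{I₁,…,I_{κ+|I|}}. -/

import Mathlib

open Finset

set_option maxHeartbeats 1000000
set_option linter.unusedVariables false

section Helpers

lemma cauchy_simple {γ : Type*} [Fintype γ] (f g : γ → ℝ) :
    (∑ j, f j * g j) ≤ Real.sqrt (∑ j, f j ^ 2) * Real.sqrt (∑ j, g j ^ 2) :=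
  Real.sum_mul_le_sqrt_mul_sqrt univ f g

def blockEquiv {ι : Type*} (n : ι → ℕ) {β : Type*} (c : ι → β) :
    (∀ l, Fin (n l)) ≃ (∀ m : β, ∀ l : {x : ι // c x = m}, Fin (n l.1)) where
  toFun i m l := i l.1
  invFun j l := j (c l) ⟨l, rfl⟩
  left_inv i := rfl
  right_inv j := by
    funext m l
    obtain ⟨x, hx⟩ := l
    subst hx
    rfl

lemma contraction_le_sqrt {ι : Type*} [Fintype ι] [DecidableEq ι] (n : ι → ℕ)
    {β : Type*} [Fintype β] [DecidableEq β]
    (A : (∀ l, Fin (n l)) → ℝ) (c : ι → β)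
    (α : ∀ m : β, (∀ l : {x : ι // c x = m}, Fin (n l.1)) → ℝ)
    (h1 : ∀ m, (∑ j, α m j ^ 2) = 1) :
    (∑ i, A i * ∏ m, α m fun l => i l.1) ≤ Real.sqrt (∑ i, A i ^ 2) := by
  set E := blockEquiv n c with hE
  have h0 : (∑ i, A i * ∏ m, α m fun l => i l.1)
      = ∑ j, A (E.symm j) * ∏ m, α m (j m) := by
    rw [← Equiv.sum_comp E.symm (fun i => A i * ∏ m, α m fun l => i l.1)]
    refine Finset.sum_congr rfl fun j _ => ?_
    congr 1
    refine Finset.prod_congr rfl fun m _ => ?_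
    congr 1
    exact congrFun (E.apply_symm_apply j) m
  have h2 : (∑ j : ∀ m : β, ∀ l : {x : ι // c x = m}, Fin (n l.1),
      (∏ m, α m (j m)) ^ 2) = 1 := by
    have e1 : (∑ j : ∀ m : β, ∀ l : {x : ι // c x = m}, Fin (n l.1),
        (∏ m, α m (j m)) ^ 2)
        = ∑ j : ∀ m : β, ∀ l : {x : ι // c x = m}, Fin (n l.1),
          ∏ m, (α m (j m)) ^ 2 := by
      refine Finset.sum_congr rfl fun j _ => ?_
      rw [← Finset.prod_pow]
    have e2 : (∏ m, ∑ jm, α m jm ^ 2)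
        = ∑ j ∈ Fintype.piFinset
            (fun m : β => (univ : Finset (∀ l : {x : ι // c x = m}, Fin (n l.1)))),
          ∏ m, (α m (j m)) ^ 2 := by
      rw [Finset.prod_univ_sum]
    rw [e1, ← Fintype.piFinset_univ, ← e2]
    simp [h1]
  have h3 : (∑ i, A (E.symm i) ^ 2) = ∑ i, A i ^ 2 :=
    Equiv.sum_comp E.symm (fun i => A i ^ 2)
  rw [h0]
  refine le_trans (cauchy_simple (fun j => A (E.symm j)) (fun j => ∏ m, α m (j m))) ?_
  rw [h2, h3, Real.sqrt_one, mul_one]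

lemma exists_unit_vector (γ : Type*) [Fintype γ] [Nonempty γ] :
    ∃ α : γ → ℝ, ∑ j, α j ^ 2 = 1 := by
  refine ⟨fun _ => 1 / Real.sqrt (Fintype.card γ), ?_⟩
  have hc : 0 < (Fintype.card γ : ℝ) := by exact_mod_cast Fintype.card_pos
  simp only [Finset.sum_const, card_univ, nsmul_eq_mul, div_pow, one_pow]
  rw [Real.sq_sqrt hc.le]
  field_simp

lemma sqrt_prod {γ : Type*} (t : Finset γ) (f : γ → ℝ) (hf : ∀ i, 0 ≤ f i) :
    Real.sqrt (∏ i ∈ t, f i) = ∏ i ∈ t, Real.sqrt (f i) := by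
  induction t using Finset.cons_induction with
  | empty => simp
  | cons a t ha ih => rw [Finset.prod_cons, Finset.prod_cons, Real.sqrt_mul (hf a), ih]

lemma partitionNorm_zero_aux {ι : Type*} [Fintype ι] [DecidableEq ι] (n : ι → ℕ)
    {β : Type*} [Fintype β] [DecidableEq β]
    (A : (∀ l, Fin (n l)) → ℝ) (c : ι → β)
    (m : β) (l : {x : ι // c x = m}) (hl : n l.1 = 0) :
    {r : ℝ | ∃ α : ∀ m : β, (∀ l : {x : ι // c x = m}, Fin (n l.1)) → ℝ,
      (∀ m, (∑ j, α m j ^ 2) = 1) ∧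
        r = ∑ i, A i * ∏ m, α m fun l => i l.1} = ∅ := by
  haveI he : IsEmpty (∀ l' : {x : ι // c x = m}, Fin (n l'.1)) :=
    ⟨fun j => by have := j l; rw [hl] at this; exact this.elim0⟩
  rw [Set.eq_empty_iff_forall_notMem]
  rintro r ⟨α, h1, -⟩
  simpa using h1 m

end Helpers

section Constr
variable {d : ℕ} (n : Fin d → ℕ) (S : Finset (Fin d)) {β : Type*} [DecidableEq β]
  (c : ({x : Fin d // x ∉ S} ⊕ {x : Fin d // x ∉ S}) → β)

/-- The extended partition map. -/
def cBig : Fin d ⊕ Fin d → β ⊕ {x : Fin d // x ∈ S} :=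
  Sum.elim
    (fun x => if h : x ∈ S then Sum.inr ⟨x, h⟩ else Sum.inl (c (Sum.inl ⟨x, h⟩)))
    (fun x => if h : x ∈ S then Sum.inr ⟨x, h⟩ else Sum.inl (c (Sum.inr ⟨x, h⟩)))

lemma cBig_inl_nmem (x : {x : Fin d // x ∉ S}) :
    cBig S c (Sum.inl x.1) = Sum.inl (c (Sum.inl x)) := by
  rcases x with ⟨z, hz⟩; simp [cBig, hz]

lemma cBig_inr_nmem (x : {x : Fin d // x ∉ S}) :
    cBig S c (Sum.inr x.1) = Sum.inl (c (Sum.inr x)) := by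
  rcases x with ⟨z, hz⟩; simp [cBig, hz]

lemma cBig_inl_mem (s : {x : Fin d // x ∈ S}) :
    cBig S c (Sum.inl s.1) = Sum.inr s := by
  rcases s with ⟨z, hz⟩; simp [cBig, hz]

lemma cBig_inr_mem (s : {x : Fin d // x ∈ S}) :
    cBig S c (Sum.inr s.1) = Sum.inr s := by
  rcases s with ⟨z, hz⟩; simp [cBig, hz]

lemma nmem_of_cBig_inl {z : Fin d} {b : β} (h : cBig S c (Sum.inl z) = Sum.inl b) :
    z ∉ S := by
  intro hz
  rw [cBig_inl_mem S c ⟨z, hz⟩] at h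
  exact absurd h (by simp)

lemma nmem_of_cBig_inr {z : Fin d} {b : β} (h : cBig S c (Sum.inr z) = Sum.inl b) :
    z ∉ S := by
  intro hz
  rw [cBig_inr_mem S c ⟨z, hz⟩] at h
  exact absurd h (by simp)

lemma c_eq_of_cBig_inl {z : Fin d} {b : β} (h : cBig S c (Sum.inl z) = Sum.inl b)
    (hz : z ∉ S) : c (Sum.inl ⟨z, hz⟩) = b := by
  rw [cBig_inl_nmem S c ⟨z, hz⟩] at h
  exact Sum.inl.inj h

lemma c_eq_of_cBig_inr {z : Fin d} {b : β} (h : cBig S c (Sum.inr z) = Sum.inl b)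
    (hz : z ∉ S) : c (Sum.inr ⟨z, hz⟩) = b := by
  rw [cBig_inr_nmem S c ⟨z, hz⟩] at h
  exact Sum.inl.inj h

lemma val_eq_of_cBig_inl {z : Fin d} {s : {x : Fin d // x ∈ S}}
    (h : cBig S c (Sum.inl z) = Sum.inr s) : s.1 = z := by
  by_cases hz : z ∈ S
  · rw [cBig_inl_mem S c ⟨z, hz⟩] at h
    exact (congrArg Subtype.val (Sum.inr.inj h)).symm
  · rw [cBig_inl_nmem S c ⟨z, hz⟩] at h
    exact absurd h (by simp)

lemma val_eq_of_cBig_inr {z : Fin d} {s : {x : Fin d // x ∈ S}}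
    (h : cBig S c (Sum.inr z) = Sum.inr s) : s.1 = z := by
  by_cases hz : z ∈ S
  · rw [cBig_inr_mem S c ⟨z, hz⟩] at h
    exact (congrArg Subtype.val (Sum.inr.inj h)).symm
  · rw [cBig_inr_nmem S c ⟨z, hz⟩] at h
    exact absurd h (by simp)

/-- Merging an off-`S` index with two diagonal indices. -/
def merge2 (i : ∀ y : {x : Fin d // x ∉ S} ⊕ {x : Fin d // x ∉ S},
      Fin (Sum.elim (fun x => n x.1) (fun x => n x.1) y))
    (k₁ k₂ : ∀ s : {x : Fin d // x ∈ S}, Fin (n s.1)) :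
    ∀ l : Fin d ⊕ Fin d, Fin (Sum.elim n n l) := fun l =>
  Sum.rec
    (fun x => if h : x ∈ S then k₁ ⟨x, h⟩ else i (Sum.inl ⟨x, h⟩))
    (fun x => if h : x ∈ S then k₂ ⟨x, h⟩ else i (Sum.inr ⟨x, h⟩)) l

/-- Restriction of a block-`inl b` assignment to the corresponding original block. -/
def resB (b : β)
    (j : ∀ x : {x : Fin d ⊕ Fin d // cBig S c x = Sum.inl b}, Fin (Sum.elim n n x.1)) :
    ∀ y : {y : {x : Fin d // x ∉ S} ⊕ {x : Fin d // x ∉ S} // c y = b},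
      Fin (Sum.elim (fun x => n x.1) (fun x => n x.1) y.1) := fun y =>
  match y with
  | ⟨Sum.inl x, hy⟩ => j ⟨Sum.inl x.1, by rw [cBig_inl_nmem S c x, hy]⟩
  | ⟨Sum.inr x, hy⟩ => j ⟨Sum.inr x.1, by rw [cBig_inr_nmem S c x, hy]⟩

def extB (b : β)
    (j : ∀ y : {y : {x : Fin d // x ∉ S} ⊕ {x : Fin d // x ∉ S} // c y = b},
      Fin (Sum.elim (fun x => n x.1) (fun x => n x.1) y.1)) :
    ∀ x : {x : Fin d ⊕ Fin d // cBig S c x = Sum.inl b}, Fin (Sum.elim n n x.1) := fun x =>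
  match x with
  | ⟨Sum.inl z, hx⟩ => j ⟨Sum.inl ⟨z, nmem_of_cBig_inl S c hx⟩,
      c_eq_of_cBig_inl S c hx (nmem_of_cBig_inl S c hx)⟩
  | ⟨Sum.inr z, hx⟩ => j ⟨Sum.inr ⟨z, nmem_of_cBig_inr S c hx⟩,
      c_eq_of_cBig_inr S c hx (nmem_of_cBig_inr S c hx)⟩

lemma resB_bijective (b : β) : Function.Bijective (resB n S c b) := by
  rw [Function.bijective_iff_has_inverse]
  refine ⟨extB n S c b, ?_, ?_⟩
  · intro j
    funext x
    rcases x with ⟨(z | z), hx⟩ <;> rfl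
  · intro j
    funext y
    rcases y with ⟨(⟨z, hz⟩ | ⟨z, hz⟩), hy⟩ <;> rfl

/-- The two coordinates of a block-`inr s` assignment. -/
def pairsB (s : {x : Fin d // x ∈ S})
    (j : ∀ x : {x : Fin d ⊕ Fin d // cBig S c x = Sum.inr s}, Fin (Sum.elim n n x.1)) :
    Fin (n s.1) × Fin (n s.1) :=
  (j ⟨Sum.inl s.1, cBig_inl_mem S c s⟩, j ⟨Sum.inr s.1, cBig_inr_mem S c s⟩)

def unpairB (s : {x : Fin d // x ∈ S}) (p : Fin (n s.1) × Fin (n s.1)) :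
    ∀ x : {x : Fin d ⊕ Fin d // cBig S c x = Sum.inr s}, Fin (Sum.elim n n x.1) := fun x =>
  match x with
  | ⟨Sum.inl z, hx⟩ => Fin.cast (congrArg n (val_eq_of_cBig_inl S c hx)) p.1
  | ⟨Sum.inr z, hx⟩ => Fin.cast (congrArg n (val_eq_of_cBig_inr S c hx)) p.2

lemma pairsB_bijective (s : {x : Fin d // x ∈ S}) :
    Function.Bijective (pairsB n S c s) := by
  rw [Function.bijective_iff_has_inverse]
  refine ⟨unpairB n S c s, ?_, ?_⟩
  · intro j
    funext x
    rcases x with ⟨(z | z), hx⟩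
    · have h := val_eq_of_cBig_inl S c hx
      subst h
      exact Fin.ext rfl
    · have h := val_eq_of_cBig_inr S c hx
      subst h
      exact Fin.ext rfl
  · intro p
    refine Prod.ext ?_ ?_ <;> exact Fin.ext rfl

/-- The splitting of a full index assignment. -/
def splitEquiv :
    (∀ l : Fin d ⊕ Fin d, Fin (Sum.elim n n l)) ≃
      ((∀ y : {x : Fin d // x ∉ S} ⊕ {x : Fin d // x ∉ S},
          Fin (Sum.elim (fun x => n x.1) (fun x => n x.1) y)) ×
        (∀ s : {x : Fin d // x ∈ S}, Fin (n s.1)) ×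
        (∀ s : {x : Fin d // x ∈ S}, Fin (n s.1))) where
  toFun i' :=
    (fun y => match y with
      | Sum.inl x => i' (Sum.inl x.1)
      | Sum.inr x => i' (Sum.inr x.1),
     fun s => i' (Sum.inl s.1), fun s => i' (Sum.inr s.1))
  invFun p := merge2 n S p.1 p.2.1 p.2.2
  left_inv i' := by
    funext x
    rcases x with z | z <;> (dsimp [merge2]; by_cases h : z ∈ S; exacts [dif_pos h, dif_neg h])
  right_inv p := by
    rcases p with ⟨i, k₁, k₂⟩
    refine Prod.ext ?_ (Prod.ext ?_ ?_)
    · funext y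
      rcases y with ⟨z, hz⟩ | ⟨z, hz⟩ <;> (dsimp [merge2]; exact dif_neg hz)
    · funext s
      dsimp [merge2]
      exact dif_pos s.2
    · funext s
      dsimp [merge2]
      exact dif_pos s.2


/-- The extended family of contraction arrays. -/
noncomputable def bigAlpha
    (α : ∀ m : β, (∀ y : {y : {x : Fin d // x ∉ S} ⊕ {x : Fin d // x ∉ S} // c y = m},
      Fin (Sum.elim (fun x => n x.1) (fun x => n x.1) y.1)) → ℝ) :
    ∀ m : β ⊕ {x : Fin d // x ∈ S},
      (∀ x : {x : Fin d ⊕ Fin d // cBig S c x = m}, Fin (Sum.elim n n x.1)) → ℝ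
  | Sum.inl b => fun j => α b (resB n S c b j)
  | Sum.inr s => fun j =>
      (if (pairsB n S c s j).1 = (pairsB n S c s j).2 then 1 else 0) / Real.sqrt (n s.1)

lemma diag_unit (N : ℕ) (h : 0 < N) :
    ∑ p : Fin N × Fin N, ((if p.1 = p.2 then (1 : ℝ) else 0) / Real.sqrt N) ^ 2 = 1 := by
  have hN : (0 : ℝ) < N := by exact_mod_cast h
  have step : ∀ p : Fin N × Fin N,
      ((if p.1 = p.2 then (1 : ℝ) else 0) / Real.sqrt N) ^ 2
        = if p.1 = p.2 then 1 / (N : ℝ) else 0 := by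
    intro p
    by_cases hp : p.1 = p.2 <;> simp [hp, div_pow, Real.sq_sqrt hN.le]
  rw [Finset.sum_congr rfl fun p _ => step p, Fintype.sum_prod_type]
  have inner : ∀ a : Fin N, (∑ b : Fin N, if a = b then 1 / (N : ℝ) else 0) = 1 / N := by
    intro a
    simp [Finset.sum_ite_eq]
  rw [Finset.sum_congr rfl fun a _ => inner a]
  simp [Finset.sum_const, card_univ]
  field_simp

lemma bigAlpha_unit (hpos : ∀ l ∈ S, 0 < n l)
    (α : ∀ m : β, (∀ y : {y : {x : Fin d // x ∉ S} ⊕ {x : Fin d // x ∉ S} // c y = m},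
      Fin (Sum.elim (fun x => n x.1) (fun x => n x.1) y.1)) → ℝ)
    (hα : ∀ m, (∑ j, α m j ^ 2) = 1) :
    ∀ m, (∑ j, bigAlpha n S c α m j ^ 2) = 1 := by
  rintro (b | s)
  · have hb := Fintype.sum_bijective (resB n S c b) (resB_bijective n S c b)
      (fun j => (α b (resB n S c b j)) ^ 2) (fun j' => (α b j') ^ 2) (fun j => rfl)
    exact hb.trans (hα b)
  · have hb := Fintype.sum_bijective (pairsB n S c s) (pairsB_bijective n S c s)
      (fun j => (bigAlpha n S c α (Sum.inr s) j) ^ 2)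
      (fun p => ((if p.1 = p.2 then (1 : ℝ) else 0) / Real.sqrt (n s.1)) ^ 2)
      (fun j => rfl)
    exact hb.trans (diag_unit (n s.1) (hpos s.1 s.2))


lemma resB_merge (b : β)
    (i : ∀ y : {x : Fin d // x ∉ S} ⊕ {x : Fin d // x ∉ S},
      Fin (Sum.elim (fun x => n x.1) (fun x => n x.1) y))
    (k₁ k₂ : ∀ s : {x : Fin d // x ∈ S}, Fin (n s.1)) :
    resB n S c b (fun x => merge2 n S i k₁ k₂ x.1)
      = fun y : {y : {x : Fin d // x ∉ S} ⊕ {x : Fin d // x ∉ S} // c y = b} => i y.1 := by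
  funext y
  rcases y with ⟨(⟨z, hz⟩ | ⟨z, hz⟩), hy⟩ <;> (dsimp [resB, merge2]; exact dif_neg hz)

lemma pairsB_merge (s : {x : Fin d // x ∈ S})
    (i : ∀ y : {x : Fin d // x ∉ S} ⊕ {x : Fin d // x ∉ S},
      Fin (Sum.elim (fun x => n x.1) (fun x => n x.1) y))
    (k₁ k₂ : ∀ s : {x : Fin d // x ∈ S}, Fin (n s.1)) :
    pairsB n S c s (fun x => merge2 n S i k₁ k₂ x.1) = (k₁ s, k₂ s) := by
  refine Prod.ext ?_ ?_ <;> (dsimp [pairsB, merge2]; exact dif_pos s.2)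

variable [Fintype β]

/-- The partially traced array. -/
def traced (B : (∀ l : Fin d ⊕ Fin d, Fin (Sum.elim n n l)) → ℝ) :
    (∀ y : {x : Fin d // x ∉ S} ⊕ {x : Fin d // x ∉ S},
      Fin (Sum.elim (fun x => n x.1) (fun x => n x.1) y)) → ℝ :=
  fun i => ∑ k : ∀ s : {x : Fin d // x ∈ S}, Fin (n s.1), B (merge2 n S i k k)

lemma key_identity (hpos : ∀ l, 0 < n l)
    (B : (∀ l : Fin d ⊕ Fin d, Fin (Sum.elim n n l)) → ℝ)
    (α : ∀ m : β, (∀ y : {y : {x : Fin d // x ∉ S} ⊕ {x : Fin d // x ∉ S} // c y = m},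
      Fin (Sum.elim (fun x => n x.1) (fun x => n x.1) y.1)) → ℝ) :
    (∑ i, traced n S B i * ∏ m, α m fun l => i l.1)
      = Real.sqrt (∏ l ∈ S, (n l : ℝ)) *
        ∑ i', B i' * ∏ m, bigAlpha n S c α m fun x => i' x.1 := by
  simp only [traced]
  have hQpos : (0 : ℝ) < ∏ s : {x : Fin d // x ∈ S}, Real.sqrt (n s.1) :=
    Finset.prod_pos fun s _ => Real.sqrt_pos.2 (by exact_mod_cast hpos s.1)
  set Q : ℝ := ∏ s : {x : Fin d // x ∈ S}, Real.sqrt (n s.1) with hQdef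
  have hQ : Real.sqrt (∏ l ∈ S, (n l : ℝ)) = Q := by
    rw [hQdef, ← sqrt_prod univ (fun s : {x : Fin d // x ∈ S} => (n s.1 : ℝ))
      (fun s => Nat.cast_nonneg _), Finset.prod_coe_sort S (fun l => (n l : ℝ))]
  have stepA : (∑ i', B i' * ∏ m, bigAlpha n S c α m fun x => i' x.1)
      = ∑ p : (∀ y : {x : Fin d // x ∉ S} ⊕ {x : Fin d // x ∉ S},
            Fin (Sum.elim (fun x => n x.1) (fun x => n x.1) y)) ×
          (∀ s : {x : Fin d // x ∈ S}, Fin (n s.1)) ×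
          (∀ s : {x : Fin d // x ∈ S}, Fin (n s.1)),
          B (merge2 n S p.1 p.2.1 p.2.2) *
            ∏ m, bigAlpha n S c α m fun x => merge2 n S p.1 p.2.1 p.2.2 x.1 :=
    (Fintype.sum_equiv (splitEquiv n S).symm _ _ fun p => rfl).symm
  have stepB : ∀ (i : ∀ y : {x : Fin d // x ∉ S} ⊕ {x : Fin d // x ∉ S},
        Fin (Sum.elim (fun x => n x.1) (fun x => n x.1) y))
      (k₁ k₂ : ∀ s : {x : Fin d // x ∈ S}, Fin (n s.1)),
      (∏ m, bigAlpha n S c α m fun x => merge2 n S i k₁ k₂ x.1)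
        = (∏ b, α b fun l => i l.1) * ((if k₁ = k₂ then 1 else 0) / Q) := by
    intro i k₁ k₂
    rw [Fintype.prod_sum_type]
    congr 1
    · refine Finset.prod_congr rfl fun b _ => ?_
      show α b (resB n S c b fun x => merge2 n S i k₁ k₂ x.1) = _
      rw [resB_merge]
    · have h1 : ∀ s : {x : Fin d // x ∈ S},
          bigAlpha n S c α (Sum.inr s) (fun x => merge2 n S i k₁ k₂ x.1)
            = (if k₁ s = k₂ s then 1 else 0) / Real.sqrt (n s.1) := by
        intro s
        show (if (pairsB n S c s fun x => merge2 n S i k₁ k₂ x.1).1 =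
            (pairsB n S c s fun x => merge2 n S i k₁ k₂ x.1).2 then (1:ℝ) else 0) /
            Real.sqrt (n s.1) = _
        rw [pairsB_merge]
      rw [Finset.prod_congr rfl fun s _ => h1 s, Finset.prod_div_distrib,
        Fintype.prod_boole, hQdef]
      congr 1
      simp [funext_iff]
  rw [stepA]
  have stepC : (∑ p : (∀ y : {x : Fin d // x ∉ S} ⊕ {x : Fin d // x ∉ S},
            Fin (Sum.elim (fun x => n x.1) (fun x => n x.1) y)) ×
          (∀ s : {x : Fin d // x ∈ S}, Fin (n s.1)) ×
          (∀ s : {x : Fin d // x ∈ S}, Fin (n s.1)),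
          B (merge2 n S p.1 p.2.1 p.2.2) *
            ∏ m, bigAlpha n S c α m fun x => merge2 n S p.1 p.2.1 p.2.2 x.1)
      = ∑ i, ∑ k₁, ∑ k₂, B (merge2 n S i k₁ k₂) *
          ((∏ b, α b fun l => i l.1) * ((if k₁ = k₂ then 1 else 0) / Q)) := by
    rw [Fintype.sum_prod_type]
    refine Finset.sum_congr rfl fun i _ => ?_
    rw [Fintype.sum_prod_type]
    refine Finset.sum_congr rfl fun k₁ _ => Finset.sum_congr rfl fun k₂ _ => ?_
    rw [stepB]
  rw [stepC]
  have stepD : ∀ (i) (k₁ : ∀ s : {x : Fin d // x ∈ S}, Fin (n s.1)),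
      (∑ k₂, B (merge2 n S i k₁ k₂) *
          ((∏ b, α b fun l => i l.1) * ((if k₁ = k₂ then 1 else 0) / Q)))
        = B (merge2 n S i k₁ k₁) * ((∏ b, α b fun l => i l.1) * (1 / Q)) := by
    intro i k₁
    have : ∀ k₂, B (merge2 n S i k₁ k₂) *
          ((∏ b, α b fun l => i l.1) * ((if k₁ = k₂ then 1 else 0) / Q))
        = if k₁ = k₂ then B (merge2 n S i k₁ k₂) *
            ((∏ b, α b fun l => i l.1) * (1 / Q)) else 0 := by
      intro k₂
      by_cases h : k₁ = k₂ <;> simp [h]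
    rw [Finset.sum_congr rfl fun k₂ _ => this k₂, Finset.sum_ite_eq, if_pos (mem_univ k₁)]
  rw [Finset.sum_congr rfl fun i _ => Finset.sum_congr rfl fun k₁ _ => stepD i k₁, hQ]
  have : ∀ i, (∑ k₁, B (merge2 n S i k₁ k₁) * ((∏ b, α b fun l => i l.1) * (1 / Q)))
      = (∑ k, B (merge2 n S i k k)) * ((∏ b, α b fun l => i l.1) * (1 / Q)) := by
    intro i; rw [Finset.sum_mul]
  rw [Finset.sum_congr rfl fun i _ => this i]
  rw [Finset.mul_sum]
  refine Finset.sum_congr rfl fun i _ => ?_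
  field_simp


end Constr


/-- The partition norm `‖A‖_{I₁,…,I_κ}` of an array `A`, where the partition of the
axes `ι` into blocks `β` is encoded by the assignment map `c : ι → β`. -/
noncomputable def partitionNorm {ι : Type*} [Fintype ι] [DecidableEq ι] (n : ι → ℕ)
    {β : Type*} [Fintype β] [DecidableEq β]
    (A : (∀ l, Fin (n l)) → ℝ) (c : ι → β) : ℝ :=
  sSup {r : ℝ | ∃ α : ∀ m : β, (∀ l : {x : ι // c x = m}, Fin (n l.1)) → ℝ,
    (∀ m, (∑ j, α m j ^ 2) = 1) ∧
      r = ∑ i, A i * ∏ m, α m fun l => i l.1}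

/-- Norm bound for the array `B^{(I)}` obtained from an order-`2d` array `B` by summing
along the diagonals of the axis pairs `(l, l+d)`, `l ∈ S`: for any partition `c` of the
remaining axes, extended to a partition of all axes by the pairs `{l, l+d}`, `l ∈ S`,
one has `‖B^{(S)}‖_c ≤ √(∏_{l∈S} n_l) ‖B‖_{c'}`. -/
theorem partial_trace_norm_bound (d : ℕ) (n : Fin d → ℕ)
    (B : (∀ l : Fin d ⊕ Fin d, Fin (Sum.elim n n l)) → ℝ) (S : Finset (Fin d))
    {β : Type*} [Fintype β] [DecidableEq β]
    (c : ({x : Fin d // x ∉ S} ⊕ {x : Fin d // x ∉ S}) → β) :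
    partitionNorm (Sum.elim (fun x => n x.1) (fun x => n x.1))
        (fun i => ∑ k : ∀ l : {x : Fin d // x ∈ S}, Fin (n l.1),
          B (fun l => Sum.rec
            (fun x => if h : x ∈ S then k ⟨x, h⟩ else i (Sum.inl ⟨x, h⟩))
            (fun x => if h : x ∈ S then k ⟨x, h⟩ else i (Sum.inr ⟨x, h⟩)) l))
        c ≤
      Real.sqrt (∏ l ∈ S, (n l : ℝ)) *
        partitionNorm (Sum.elim n n) B
          (Sum.elim
            (fun x => if h : x ∈ S then Sum.inr ⟨x, h⟩ else Sum.inl (c (Sum.inl ⟨x, h⟩)))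
            (fun x => if h : x ∈ S then Sum.inr ⟨x, h⟩ else Sum.inl (c (Sum.inr ⟨x, h⟩)))
            : Fin d ⊕ Fin d → β ⊕ {x : Fin d // x ∈ S}) := by
  classical
  have hcB : (Sum.elim
      (fun x : Fin d => if h : x ∈ S then Sum.inr ⟨x, h⟩ else Sum.inl (c (Sum.inl ⟨x, h⟩)))
      (fun x : Fin d => if h : x ∈ S then Sum.inr ⟨x, h⟩ else Sum.inl (c (Sum.inr ⟨x, h⟩)))
      : Fin d ⊕ Fin d → β ⊕ {x : Fin d // x ∈ S}) = cBig S c := rfl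
  have hA : (fun i => ∑ k : ∀ l : {x : Fin d // x ∈ S}, Fin (n l.1),
          B (fun l => Sum.rec
            (fun x => if h : x ∈ S then k ⟨x, h⟩ else i (Sum.inl ⟨x, h⟩))
            (fun x => if h : x ∈ S then k ⟨x, h⟩ else i (Sum.inr ⟨x, h⟩)) l))
      = traced n S B := rfl
  rw [hcB, hA]
  by_cases hzero : ∀ l, 0 < n l
  · -- main case
    unfold partitionNorm
    refine csSup_le ?_ ?_
    · have hne : ∀ m : β, Nonempty (∀ y : {y : {x : Fin d // x ∉ S} ⊕ {x : Fin d // x ∉ S} //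
          c y = m}, Fin (Sum.elim (fun x => n x.1) (fun x => n x.1) y.1)) := fun m =>
        Classical.nonempty_pi.mpr fun y => by
          rcases y with ⟨(z | z), hy⟩ <;> exact ⟨⟨0, hzero _⟩⟩
      choose α₀ hα₀ using fun m => letI := hne m; exists_unit_vector
        (∀ y : {y : {x : Fin d // x ∉ S} ⊕ {x : Fin d // x ∉ S} // c y = m},
          Fin (Sum.elim (fun x : {x : Fin d // x ∉ S} => n x.1)
            (fun x : {x : Fin d // x ∉ S} => n x.1) y.1))
      exact ⟨_, α₀, hα₀, rfl⟩
    · rintro r ⟨α, hα, rfl⟩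
      rw [key_identity n S c hzero B α]
      refine mul_le_mul_of_nonneg_left (le_csSup ?_ ?_) (Real.sqrt_nonneg _)
      · refine ⟨Real.sqrt (∑ i', B i' ^ 2), ?_⟩
        rintro r' ⟨α', h1', rfl⟩
        exact contraction_le_sqrt (Sum.elim n n) B (cBig S c) α' h1'
      · exact ⟨bigAlpha n S c α, bigAlpha_unit n S c (fun l _ => hzero l) α hα, rfl⟩
  · -- some n l = 0
    push_neg at hzero
    obtain ⟨l, hl⟩ := hzero
    have hl0 : n l = 0 := Nat.le_zero.mp hl
    have hR : partitionNorm (Sum.elim n n) B (cBig S c) = 0 := by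
      unfold partitionNorm
      rw [partitionNorm_zero_aux (Sum.elim n n) B (cBig S c) (cBig S c (Sum.inl l))
        ⟨Sum.inl l, rfl⟩ hl0]
      exact Real.sSup_empty
    rw [hR, mul_zero]
    by_cases hmem : l ∈ S
    · unfold partitionNorm
      refine Real.sSup_le ?_ le_rfl
      rintro r ⟨α, h1, rfl⟩
      refine le_of_eq (Finset.sum_eq_zero fun i _ => ?_)
      haveI : IsEmpty (∀ s : {x : Fin d // x ∈ S}, Fin (n s.1)) :=
        ⟨fun k => by have := k ⟨l, hmem⟩; rw [hl0] at this; exact this.elim0⟩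
      simp [traced]
    · have hL : partitionNorm (Sum.elim (fun x : {x : Fin d // x ∉ S} => n x.1)
          (fun x => n x.1)) (traced n S B) c = 0 := by
        unfold partitionNorm
        rw [partitionNorm_zero_aux _ (traced n S B) c (c (Sum.inl ⟨l, hmem⟩))
          ⟨Sum.inl ⟨l, hmem⟩, rfl⟩ hl0]
        exact Real.sSup_empty
      rw [hL]
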